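/- For all 1 ≤ j < i ≤ d one has (a_i^{(j)})^* T_j^2 = T_j^2 (a_i^{(j)})^* and (a_i^{(j)})^* t_j = μ t_j (a_i^{(j)})^*, where T_j^2 = ∑_{n=1}^∞ μ^{2(n−1)} t_j^n t_j^{*n}. -/
import Mathlib


/-- For `1 ≤ j < i ≤ d`: `(aᵢ⁽ʲ⁾)* Tⱼ² = Tⱼ² (aᵢ⁽ʲ⁾)*` and
`(aᵢ⁽ʲ⁾)* tⱼ = μ tⱼ (aᵢ⁽ʲ⁾)*`, where `Tⱼ² = ∑_{n=1}^∞ μ^{2(n-1)} tⱼⁿ tⱼ*ⁿ`. -/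
theorem a_star_commutes_T_and_t {A : Type*} [CStarAlgebra A] [PartialOrder A] [StarOrderedRing A]
    {d : ℕ} (hd : 0 < d) {μ : ℝ} (hμ₁ : -1 < μ) (hμ₂ : μ < 1)
    (t T P : ℕ → A) (a : ℕ → ℕ → A)
    (rel1 : ∀ i j, 1 ≤ i → i ≤ d → 1 ≤ j → j ≤ d → i ≠ j → star (t i) * t j = 0)
    (rel2 : ∀ i, 1 ≤ i → i ≤ d →
      star (t i) * t i = 1 - ∑ k ∈ Finset.Ico 1 i, t k * star (t k))
    (rel3 : ∀ i j, 1 ≤ i → i < j → j ≤ d → t j * t i = 0)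
    (hP : ∀ j, P j = 1 - ∑ k ∈ Finset.Icc 1 j, t k * star (t k))
    (hTpos : ∀ i, 1 ≤ i → i ≤ d → 0 ≤ T i)
    (hTsq : ∀ i, 1 ≤ i → i ≤ d →
      HasSum (fun n : ℕ => μ ^ (2 * n) • ((t i) ^ (n + 1) * star ((t i) ^ (n + 1))))
        (T i ^ 2))
    (haii : ∀ i, 1 ≤ i → i ≤ d → a i i = T i * t i)
    (haij : ∀ i j, 1 ≤ j → j < i → i ≤ d →
      HasSum (fun n : ℕ => μ ^ n • ((t j) ^ n * a i (j + 1) * star ((t j) ^ n)))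
        (a i j)) :
    ∀ i j, 1 ≤ j → j < i → i ≤ d →
      star (a i j) * T j ^ 2 = T j ^ 2 * star (a i j) ∧
      star (a i j) * t j = μ • (t j * star (a i j)) := by
  intro i j hj1 hji hid
  have hjd : j ≤ d := le_trans (le_of_lt hji) hid
  have hi1 : 1 ≤ i := lt_of_le_of_lt hj1 hji |>.le
  -- a HasSum of an identically-zero function sums to zero
  have hzero : ∀ {f : ℕ → A} {s : A}, HasSum f s → (∀ n, f n = 0) → s = 0 := by
    intro f s hs hf
    have hfe : f = fun _ => (0 : A) := funext hf
    rw [hfe] at hs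
    exact hs.unique hasSum_zero
  -- base case of the vanishing lemma
  have base : ∀ k, 1 ≤ k → k < i → star (t k) * a i i = 0 ∧ a i i * t k = 0 := by
    intro k hk1 hki
    have hkd : k ≤ d := le_trans (le_of_lt hki) hid
    have hTsa : star (T i) = T i := IsSelfAdjoint.of_nonneg (hTpos i hi1 hid)
    have hkT2 : star (t k) * T i ^ 2 = 0 := by
      have hs : HasSum (fun n : ℕ =>
          star (t k) * (μ ^ (2 * n) • ((t i) ^ (n + 1) * star ((t i) ^ (n + 1)))))
          (star (t k) * T i ^ 2) := (hTsq i hi1 hid).mul_left (star (t k))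
      refine hzero hs ?_
      intro n
      have hki0 : star (t k) * (t i) ^ (n + 1) = 0 := by
        rw [pow_succ', ← mul_assoc, rel1 k i hk1 hkd hi1 hid (ne_of_lt hki), zero_mul]
      rw [mul_smul_comm, ← mul_assoc, hki0, zero_mul, smul_zero]
    have hTk : T i * t k = 0 := by
      apply (CStarRing.star_mul_self_eq_zero_iff _).mp
      rw [star_mul, hTsa, mul_assoc, ← mul_assoc (T i), ← sq, ← mul_assoc, hkT2, zero_mul]
    have hkT : star (t k) * T i = 0 := by
      have h := congrArg star hTk
      rwa [star_mul, hTsa, star_zero] at h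
    constructor
    · rw [haii i hi1 hid, ← mul_assoc, hkT, zero_mul]
    · rw [haii i hi1 hid, mul_assoc, rel3 k i hk1 hki hid, mul_zero]
  -- vanishing lemma, by downward induction:  t_k* a_i^{(m)} = 0 = a_i^{(m)} t_k  for k < m ≤ i
  have vanish : ∀ r m, i ≤ m + r → 1 ≤ m → m ≤ i → ∀ k, 1 ≤ k → k < m →
      star (t k) * a i m = 0 ∧ a i m * t k = 0 := by
    intro r
    induction r with
    | zero =>
      intro m hr h1 h2 k hk1 hk2
      have hmi : m = i := le_antisymm h2 (by omega)
      subst hmi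
      exact base k hk1 hk2
    | succ r ih =>
      intro m hr h1 h2 k hk1 hk2
      rcases eq_or_lt_of_le h2 with he | hlt
      · subst he; exact base k hk1 hk2
      · have hkd : k ≤ d := by omega
        have hmd : m ≤ d := by omega
        have hb1 : star (t k) * a i (m + 1) = 0 :=
          (ih (m + 1) (by omega) (by omega) hlt k hk1 (by omega)).1
        have hb2 : a i (m + 1) * t k = 0 :=
          (ih (m + 1) (by omega) (by omega) hlt k hk1 (by omega)).2
        have hs := haij i m h1 hlt hid
        constructor
        · have hsl : HasSum (fun n : ℕ =>
              star (t k) * (μ ^ n • ((t m) ^ n * a i (m + 1) * star ((t m) ^ n))))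
              (star (t k) * a i m) := hs.mul_left (star (t k))
          refine hzero hsl ?_
          intro n
          cases n with
          | zero => simpa using hb1
          | succ n =>
            have hkm : star (t k) * (t m) ^ (n + 1) = 0 := by
              rw [pow_succ', ← mul_assoc, rel1 k m hk1 hkd (by omega) hmd (by omega), zero_mul]
            rw [mul_smul_comm, ← mul_assoc, ← mul_assoc, hkm, zero_mul, zero_mul, smul_zero]
        · have hsr : HasSum (fun n : ℕ =>
              (μ ^ n • ((t m) ^ n * a i (m + 1) * star ((t m) ^ n))) * t k)
              (a i m * t k) := hs.mul_right (t k)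
          refine hzero hsr ?_
          intro n
          cases n with
          | zero => simpa using hb2
          | succ n =>
            have hmk : star ((t m) ^ (n + 1)) * t k = 0 := by
              rw [star_pow, pow_succ, mul_assoc, rel1 m k (by omega) hmd hk1 hkd (by omega),
                mul_zero]
            rw [smul_mul_assoc, mul_assoc, hmk, mul_zero, smul_zero]
  -- having both kill properties for k ≤ j of a "coefficient" c gives the commutation with t j
  have claimC : ∀ c s : A,
      HasSum (fun n : ℕ => μ ^ n • ((t j) ^ n * c * star ((t j) ^ n))) s →
      (∀ k, 1 ≤ k → k ≤ j → c * t k = 0) → s * t j = μ • (t j * s) := by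
    intro c s hcs hck
    have hkill : ∀ (n : ℕ) k, 1 ≤ k → k < j → c * (star (t j)) ^ n * t k = 0 := by
      intro n k hk1 hkj
      cases n with
      | zero => simpa using hck k hk1 (le_of_lt hkj)
      | succ n =>
        have hjk : star (t j) * t k = 0 := rel1 j k hj1 hjd hk1 (by omega) (by omega)
        rw [pow_succ, ← mul_assoc, mul_assoc (c * (star (t j)) ^ n), hjk, mul_zero]
    have subkey : ∀ n : ℕ, c * (star (t j)) ^ (n + 1) * t j = c * (star (t j)) ^ n := by
      intro n
      have hstt := rel2 j hj1 hjd
      rw [pow_succ, ← mul_assoc, mul_assoc (c * (star (t j)) ^ n), hstt, mul_sub, mul_one,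
        Finset.mul_sum]
      have hterm : ∀ k ∈ Finset.Ico 1 j,
          (c * (star (t j)) ^ n) * (t k * star (t k)) = 0 := by
        intro k hk
        simp only [Finset.mem_Ico] at hk
        rw [← mul_assoc, hkill n k hk.1 hk.2, zero_mul]
      rw [Finset.sum_congr rfl hterm, Finset.sum_const_zero, sub_zero]
    have hkey0 : ∀ n : ℕ,
        ((t j) ^ (n + 1) * c * star ((t j) ^ (n + 1))) * t j
          = t j * ((t j) ^ n * c * star ((t j) ^ n)) := by
      intro n
      have h := subkey n
      simp only [star_pow, mul_assoc] at h ⊢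
      rw [h, pow_succ', mul_assoc]
    have hkey : ∀ n : ℕ,
        (μ ^ (n + 1) • ((t j) ^ (n + 1) * c * star ((t j) ^ (n + 1)))) * t j
          = μ • (t j * (μ ^ n • ((t j) ^ n * c * star ((t j) ^ n)))) := by
      intro n
      rw [smul_mul_assoc, hkey0 n, mul_smul_comm, smul_smul, ← pow_succ']
    have h1 : HasSum (fun n : ℕ =>
        (μ ^ n • ((t j) ^ n * c * star ((t j) ^ n))) * t j) (s * t j) := hcs.mul_right (t j)
    have h2 : HasSum (fun n : ℕ =>
        μ • (t j * (μ ^ n • ((t j) ^ n * c * star ((t j) ^ n))))) (μ • (t j * s)) :=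
      (hcs.mul_left (t j)).const_smul μ
    have h3 : HasSum (fun n : ℕ =>
        (μ ^ (n + 1) • ((t j) ^ (n + 1) * c * star ((t j) ^ (n + 1)))) * t j) (μ • (t j * s)) := by
      have hfe : (fun n : ℕ =>
          (μ ^ (n + 1) • ((t j) ^ (n + 1) * c * star ((t j) ^ (n + 1)))) * t j)
          = fun n : ℕ => μ • (t j * (μ ^ n • ((t j) ^ n * c * star ((t j) ^ n)))) := funext hkey
      rw [hfe]; exact h2
    have h4 := (hasSum_nat_add_iff (f := fun n : ℕ =>
        (μ ^ n • ((t j) ^ n * c * star ((t j) ^ n))) * t j) 1).mp h3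
    have h5 : s * t j = μ • (t j * s) + ∑ n ∈ Finset.range 1,
        (μ ^ n • ((t j) ^ n * c * star ((t j) ^ n))) * t j := h1.unique h4
    rw [h5]
    have h6 : ∑ n ∈ Finset.range 1,
        (μ ^ n • ((t j) ^ n * c * star ((t j) ^ n))) * t j = 0 := by
      simp [hck j hj1 le_rfl]
    rw [h6, add_zero]
  -- apply to c = a i (j+1) and c = star (a i (j+1))
  have hb := fun (k : ℕ) (hk1 : 1 ≤ k) (hkj : k ≤ j) =>
    vanish i (j + 1) (by omega) (by omega) (by omega) k hk1 (by omega)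
  have honesb : ∀ k, 1 ≤ k → k ≤ j → a i (j + 1) * t k = 0 := fun k h1 h2 => (hb k h1 h2).2
  have honessb : ∀ k, 1 ≤ k → k ≤ j → star (a i (j + 1)) * t k = 0 := by
    intro k h1 h2
    have h := congrArg star (hb k h1 h2).1
    rwa [star_mul, star_star, star_zero] at h
  have hstar : HasSum (fun n : ℕ =>
      μ ^ n • ((t j) ^ n * star (a i (j + 1)) * star ((t j) ^ n))) (star (a i j)) := by
    have h := (haij i j hj1 hji hid).star
    simp only [star_smul, star_trivial, star_mul, star_star, ← mul_assoc] at h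
    exact h
  have E2 : star (a i j) * t j = μ • (t j * star (a i j)) :=
    claimC (star (a i (j + 1))) (star (a i j)) hstar honessb
  have E1 : a i j * t j = μ • (t j * a i j) :=
    claimC (a i (j + 1)) (a i j) (haij i j hj1 hji hid) honesb
  have E1' : star (t j) * star (a i j) = μ • (star (a i j) * star (t j)) := by
    have h := congrArg star E1
    rwa [star_mul, star_smul, star_trivial μ, star_mul] at h
  refine ⟨?_, E2⟩
  set s := star (a i j) with hsdef
  have Epow1 : ∀ n : ℕ, s * (t j) ^ n = μ ^ n • ((t j) ^ n * s) := by
    intro n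
    induction n with
    | zero => simp
    | succ n ih =>
      rw [pow_succ, pow_succ, ← mul_assoc, ih, smul_mul_assoc, mul_assoc, E2, mul_smul_comm,
        smul_smul, mul_assoc]
  have Epow2 : ∀ n : ℕ, (star (t j)) ^ n * s = μ ^ n • (s * (star (t j)) ^ n) := by
    intro n
    induction n with
    | zero => simp
    | succ n ih =>
      rw [pow_succ', pow_succ', mul_assoc, ih, mul_smul_comm, ← mul_assoc, E1',
        smul_mul_assoc, smul_smul, mul_comm (μ ^ n) μ, mul_assoc]
  have core : ∀ n : ℕ, s * ((t j) ^ (n + 1) * star ((t j) ^ (n + 1)))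
      = ((t j) ^ (n + 1) * star ((t j) ^ (n + 1))) * s := by
    intro n
    rw [star_pow]
    conv_lhs => rw [← mul_assoc, Epow1 (n + 1), smul_mul_assoc, mul_assoc]
    conv_rhs => rw [mul_assoc, Epow2 (n + 1), mul_smul_comm]
  have heq : ∀ n : ℕ, s * (μ ^ (2 * n) • ((t j) ^ (n + 1) * star ((t j) ^ (n + 1))))
      = (μ ^ (2 * n) • ((t j) ^ (n + 1) * star ((t j) ^ (n + 1)))) * s := by
    intro n
    rw [mul_smul_comm, smul_mul_assoc, core n]
  have hL : HasSum (fun n : ℕ =>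
      s * (μ ^ (2 * n) • ((t j) ^ (n + 1) * star ((t j) ^ (n + 1))))) (s * T j ^ 2) :=
    (hTsq j hj1 hjd).mul_left s
  have hR : HasSum (fun n : ℕ =>
      (μ ^ (2 * n) • ((t j) ^ (n + 1) * star ((t j) ^ (n + 1)))) * s) (T j ^ 2 * s) :=
    (hTsq j hj1 hjd).mul_right s
  have hfe : (fun n : ℕ => s * (μ ^ (2 * n) • ((t j) ^ (n + 1) * star ((t j) ^ (n + 1)))))
      = fun n : ℕ => (μ ^ (2 * n) • ((t j) ^ (n + 1) * star ((t j) ^ (n + 1)))) * s :=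
    funext heq
  rw [hfe] at hL
  exact hL.unique hR
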